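/- Let φ: [-1,1] → ℂ be a twice continuously differentiable function satisfying the Neumann boundary value problem (|k|² - d²/dz²) φ(z) = a(z) on (-1,1) with φ'(±1) = 0, where k ∈ ℤ² and a ∈ L²(-1,1). If k = 0 assume additionally ∫_{-1}^{1} φ(z) dz = 0. Then there is a constant C > 0, independent of k, such that ‖|k|² φ‖_{L²} + ‖|k| φ‖_{H¹} + ‖φ‖_{H²} ≤ C ‖a‖_{L²}. -/

import Mathlib

open Real MeasureTheory Set

noncomputable def L2norm (f : ℝ → ℂ) : ℝ :=
  Real.sqrt (∫ z in Set.Ioo (-1:ℝ) 1, ‖f z‖ ^ 2)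

noncomputable def H1norm (f : ℝ → ℂ) : ℝ :=
  Real.sqrt (∫ z in Set.Ioo (-1:ℝ) 1, (‖f z‖ ^ 2 + ‖deriv f z‖ ^ 2))

noncomputable def H2norm (f : ℝ → ℂ) : ℝ :=
  Real.sqrt (∫ z in Set.Ioo (-1:ℝ) 1,
    (‖f z‖ ^ 2 + ‖deriv f z‖ ^ 2 + ‖deriv (deriv f) z‖ ^ 2))

noncomputable def knorm (k : ℤ × ℤ) : ℝ :=
  Real.sqrt ((k.1 : ℝ) ^ 2 + (k.2 : ℝ) ^ 2)

noncomputable abbrev μI : Measure ℝ := volume.restrict (Set.Ioo (-1:ℝ) 1)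

instance : IsFiniteMeasure μI := by
  constructor
  rw [Measure.restrict_apply_univ, Real.volume_Ioo]
  exact ENNReal.ofReal_lt_top

lemma memL2 {E : Type*} [NormedAddCommGroup E] {f : ℝ → E} (hf : Continuous f) :
    MemLp f (ENNReal.ofReal 2) μI := by
  obtain ⟨C, hC⟩ := (isCompact_Icc (a := (-1:ℝ)) (b := 1)).exists_bound_of_continuousOn
    hf.continuousOn
  refine MemLp.of_bound hf.aestronglyMeasurable C ?_
  filter_upwards [ae_restrict_mem measurableSet_Ioo] with x hx
  exact hC x (Ioo_subset_Icc_self hx)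

lemma cs {E : Type*} [NormedAddCommGroup E] {f g : ℝ → E} (hf : Continuous f) (hg : Continuous g) :
    ∫ z in Set.Ioo (-1:ℝ) 1, ‖f z‖ * ‖g z‖ ≤
      Real.sqrt (∫ z in Set.Ioo (-1:ℝ) 1, ‖f z‖^2) * Real.sqrt (∫ z in Set.Ioo (-1:ℝ) 1, ‖g z‖^2) := by
  have h := integral_mul_norm_le_Lp_mul_Lq (μ := μI)
    (Real.holderConjugate_iff_eq_conjExponent (by norm_num)|>.mpr (by norm_num))
    (memL2 hf) (memL2 hg)
  have e1 : ∀ (F : ℝ → E), (∫ z, ‖F z‖ ^ (2:ℝ) ∂μI) = ∫ z in Set.Ioo (-1:ℝ) 1, ‖F z‖^2 := by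
    intro F; norm_num [Real.rpow_natCast]
  rw [e1, e1] at h
  refine h.trans_eq ?_
  rw [Real.sqrt_eq_rpow, Real.sqrt_eq_rpow]

lemma contIntOn {E : Type*} [NormedAddCommGroup E] {f : ℝ → E} (hf : Continuous f) :
    IntegrableOn f (Set.Ioo (-1:ℝ) 1) :=
  (hf.integrableOn_Icc).mono_set Ioo_subset_Icc_self

lemma ioo_eq_interval {E : Type*} [NormedAddCommGroup E] [NormedSpace ℝ E] (f : ℝ → E) :
    (∫ z in Set.Ioo (-1:ℝ) 1, f z) = ∫ z in (-1:ℝ)..1, f z := by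
  rw [intervalIntegral.integral_of_le (by norm_num), MeasureTheory.integral_Ioc_eq_integral_Ioo]

lemma derivs {φ : ℝ → ℂ} (hφ : ContDiff ℝ 2 φ) :
    (∀ x, HasDerivAt φ (deriv φ x) x) ∧ (∀ x, HasDerivAt (deriv φ) (deriv (deriv φ) x) x)
      ∧ Continuous (deriv φ) ∧ Continuous (deriv (deriv φ)) := by
  have h1 := (contDiff_succ_iff_deriv (n := 1)).mp (by exact_mod_cast hφ)
  have h2 := (contDiff_succ_iff_deriv (n := 0)).mp (by exact_mod_cast h1.2.2)
  exact ⟨fun x => (h1.1 x).hasDerivAt, fun x => (h2.1 x).hasDerivAt,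
    h1.2.2.continuous, h2.2.2.continuous⟩

lemma hasDerivAt_conj {f : ℝ → ℂ} {f' : ℂ} {x : ℝ} (hf : HasDerivAt f f' x) :
    HasDerivAt (fun y => (starRingEnd ℂ) (f y)) ((starRingEnd ℂ) f') x := by
  have := (Complex.conjCLE.hasFDerivAt (x := f x)).comp_hasDerivAt x hf
  exact this

lemma ibp {φ : ℝ → ℂ} (hφ : ContDiff ℝ 2 φ) (h1 : deriv φ (-1) = 0) (h2 : deriv φ 1 = 0) :
    (∫ z in Set.Ioo (-1:ℝ) 1, deriv (deriv φ) z * (starRingEnd ℂ) (φ z)) =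
      - ∫ z in Set.Ioo (-1:ℝ) 1, deriv φ z * (starRingEnd ℂ) (deriv φ z) := by
  obtain ⟨hd0, hd1, hc1, hc2⟩ := derivs hφ
  rw [ioo_eq_interval, ioo_eq_interval]
  have := intervalIntegral.integral_deriv_mul_eq_sub (a := (-1:ℝ)) (b := 1)
    (u := deriv φ) (v := fun y => (starRingEnd ℂ) (φ y))
    (u' := deriv (deriv φ)) (v' := fun y => (starRingEnd ℂ) (deriv φ y))
    (fun x _ => hd1 x) (fun x _ => hasDerivAt_conj (hd0 x))
    (hc2.intervalIntegrable _ _)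
    ((Complex.continuous_conj.comp hc1).intervalIntegrable _ _)
  rw [h1, h2] at this
  simp only [zero_mul, sub_zero, mul_zero, sub_self] at this
  have h3 := intervalIntegral.integral_add (μ := volume) (a := (-1:ℝ)) (b := 1)
    (f := fun z => deriv (deriv φ) z * (starRingEnd ℂ) (φ z))
    (g := fun z => deriv φ z * (starRingEnd ℂ) (deriv φ z))
    ((hc2.mul (Complex.continuous_conj.comp (hφ.continuous))).intervalIntegrable _ _)
    ((hc1.mul (Complex.continuous_conj.comp hc1)).intervalIntegrable _ _)
  rw [this] at h3
  exact eq_neg_of_add_eq_zero_left h3.symm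

lemma re_mul_conj (z : ℂ) : (z * (starRingEnd ℂ) z).re = ‖z‖^2 := by
  rw [Complex.mul_conj]; simp [Complex.sq_norm]

lemma energy {φ : ℝ → ℂ} (hφ : ContDiff ℝ 2 φ) (h1 : deriv φ (-1) = 0) (h2 : deriv φ 1 = 0)
    (m : ℝ) :
    m * (∫ z in Set.Ioo (-1:ℝ) 1, ‖φ z‖^2) + (∫ z in Set.Ioo (-1:ℝ) 1, ‖deriv φ z‖^2) ≤
      Real.sqrt (∫ z in Set.Ioo (-1:ℝ) 1, ‖(m:ℂ) * φ z - deriv (deriv φ) z‖^2) *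
      Real.sqrt (∫ z in Set.Ioo (-1:ℝ) 1, ‖φ z‖^2) := by
  obtain ⟨hd0, hd1, hc1, hc2⟩ := derivs hφ
  set b : ℝ → ℂ := fun z => (m:ℂ) * φ z - deriv (deriv φ) z with hb
  have hbc : Continuous b := (continuous_const.mul hφ.continuous).sub hc2
  have hint1 : IntegrableOn (fun z => φ z * (starRingEnd ℂ) (φ z)) (Set.Ioo (-1:ℝ) 1) :=
    contIntOn (hφ.continuous.mul (Complex.continuous_conj.comp hφ.continuous))
  have hint2 : IntegrableOn (fun z => deriv (deriv φ) z * (starRingEnd ℂ) (φ z))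
      (Set.Ioo (-1:ℝ) 1) :=
    contIntOn (hc2.mul (Complex.continuous_conj.comp hφ.continuous))
  have hint3 : IntegrableOn (fun z => deriv φ z * (starRingEnd ℂ) (deriv φ z))
      (Set.Ioo (-1:ℝ) 1) :=
    contIntOn (hc1.mul (Complex.continuous_conj.comp hc1))
  have hsplit : (∫ z in Set.Ioo (-1:ℝ) 1, b z * (starRingEnd ℂ) (φ z)) =
      (m:ℂ) * (∫ z in Set.Ioo (-1:ℝ) 1, φ z * (starRingEnd ℂ) (φ z))
      + ∫ z in Set.Ioo (-1:ℝ) 1, deriv φ z * (starRingEnd ℂ) (deriv φ z) := by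
    have : (∫ z in Set.Ioo (-1:ℝ) 1, b z * (starRingEnd ℂ) (φ z)) =
        (∫ z in Set.Ioo (-1:ℝ) 1, ((m:ℂ) * (φ z * (starRingEnd ℂ) (φ z))
          - deriv (deriv φ) z * (starRingEnd ℂ) (φ z))) := by
      congr 1; ext z; simp [hb]; ring
    rw [this, integral_sub ((hint1.const_mul _)) hint2, integral_const_mul, ibp hφ h1 h2]
    ring
  -- take real parts
  have hre : m * (∫ z in Set.Ioo (-1:ℝ) 1, ‖φ z‖^2)
      + (∫ z in Set.Ioo (-1:ℝ) 1, ‖deriv φ z‖^2) =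
      (∫ z in Set.Ioo (-1:ℝ) 1, b z * (starRingEnd ℂ) (φ z)).re := by
    rw [hsplit]
    have e1 : (∫ z in Set.Ioo (-1:ℝ) 1, ‖φ z‖^2) =
        (∫ z in Set.Ioo (-1:ℝ) 1, φ z * (starRingEnd ℂ) (φ z)).re := by
      rw [← RCLike.re_eq_complex_re, ← integral_re hint1]; exact setIntegral_congr_fun measurableSet_Ioo
        (fun z _ => (re_mul_conj (φ z)).symm)
    have e2 : (∫ z in Set.Ioo (-1:ℝ) 1, ‖deriv φ z‖^2) =
        (∫ z in Set.Ioo (-1:ℝ) 1, deriv φ z * (starRingEnd ℂ) (deriv φ z)).re := by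
      rw [← RCLike.re_eq_complex_re, ← integral_re hint3]; exact setIntegral_congr_fun measurableSet_Ioo
        (fun z _ => (re_mul_conj (deriv φ z)).symm)
    rw [e1, e2]
    simp [Complex.add_re, Complex.mul_re]
  rw [hre]
  calc (∫ z in Set.Ioo (-1:ℝ) 1, b z * (starRingEnd ℂ) (φ z)).re
      ≤ ‖∫ z in Set.Ioo (-1:ℝ) 1, b z * (starRingEnd ℂ) (φ z)‖ := Complex.re_le_norm _
    _ ≤ ∫ z in Set.Ioo (-1:ℝ) 1, ‖b z * (starRingEnd ℂ) (φ z)‖ :=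
        norm_integral_le_integral_norm _
    _ = ∫ z in Set.Ioo (-1:ℝ) 1, ‖b z‖ * ‖φ z‖ := by
        congr 1; ext z; rw [norm_mul, RCLike.norm_conj]
    _ ≤ _ := cs hbc hφ.continuous

lemma exists_zero {u : ℝ → ℝ} (hc : Continuous u)
    (hmean : (∫ z in Set.Ioo (-1:ℝ) 1, u z) = 0) :
    ∃ c ∈ Set.Icc (-1:ℝ) 1, u c = 0 := by
  by_contra h
  push_neg at h
  have hsign : (∀ x ∈ Set.Icc (-1:ℝ) 1, 0 < u x) ∨ (∀ x ∈ Set.Icc (-1:ℝ) 1, u x < 0) := by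
    have hm1 : (-1:ℝ) ∈ Set.Icc (-1:ℝ) 1 := by constructor <;> norm_num
    rcases (h (-1) hm1).lt_or_gt with hneg | hpos
    · right
      intro x hx
      by_contra hge
      push_neg at hge
      have hgt : 0 < u x := lt_of_le_of_ne hge (Ne.symm (h x hx))
      have hiv := intermediate_value_uIcc (a := (-1:ℝ)) (b := x) hc.continuousOn
      have h0 : (0:ℝ) ∈ Set.uIcc (u (-1)) (u x) := by
        rw [Set.mem_uIcc]; left; exact ⟨hneg.le, hgt.le⟩
      obtain ⟨c, hc1, hc2⟩ := hiv h0
      have : c ∈ Set.Icc (-1:ℝ) 1 := by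
        have : Set.uIcc (-1:ℝ) x ⊆ Set.Icc (-1:ℝ) 1 := Set.uIcc_subset_Icc hm1 hx
        exact this hc1
      exact h c this hc2
    · left
      intro x hx
      by_contra hge
      push_neg at hge
      have hlt : u x < 0 := lt_of_le_of_ne hge (h x hx)
      have hiv := intermediate_value_uIcc (a := (-1:ℝ)) (b := x) hc.continuousOn
      have h0 : (0:ℝ) ∈ Set.uIcc (u (-1)) (u x) := by
        rw [Set.mem_uIcc]; right; exact ⟨hlt.le, hpos.le⟩
      obtain ⟨c, hc1, hc2⟩ := hiv h0
      have : c ∈ Set.Icc (-1:ℝ) 1 := Set.uIcc_subset_Icc hm1 hx hc1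
      exact h c this hc2
  have hioo : (∫ z in Set.Ioo (-1:ℝ) 1, u z) = ∫ z in (-1:ℝ)..1, u z := ioo_eq_interval u
  rcases hsign with hpos | hneg
  · have := intervalIntegral.intervalIntegral_pos_of_pos_on (hc.intervalIntegrable _ _)
      (fun x hx => hpos x (Ioo_subset_Icc_self hx)) (by norm_num)
    rw [← hioo, hmean] at this
    exact lt_irrefl _ this
  · have := intervalIntegral.intervalIntegral_pos_of_pos_on ((hc.neg).intervalIntegrable _ _)
      (fun x hx => by simpa using (hneg x (Ioo_subset_Icc_self hx))) (by norm_num)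
    simp only [Pi.neg_apply] at this
    rw [intervalIntegral.integral_neg, ← hioo, hmean, neg_zero] at this
    exact lt_irrefl _ this

lemma poincare_real {u u' : ℝ → ℝ} (hu : ∀ x, HasDerivAt u (u' x) x)
    (hc : Continuous u) (hc' : Continuous u')
    (hmean : (∫ z in Set.Ioo (-1:ℝ) 1, u z) = 0) :
    (∫ z in Set.Ioo (-1:ℝ) 1, ‖u z‖^2) ≤ 4 * ∫ z in Set.Ioo (-1:ℝ) 1, ‖u' z‖^2 := by
  obtain ⟨c, hcmem, hc0⟩ := exists_zero hc hmean
  set K : ℝ := ∫ z in Set.Ioo (-1:ℝ) 1, ‖u' z‖ with hK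
  have hKnonneg : 0 ≤ K := setIntegral_nonneg measurableSet_Ioo (fun x _ => norm_nonneg _)
  -- pointwise bound
  have hpt : ∀ x ∈ Set.Icc (-1:ℝ) 1, |u x| ≤ K := by
    intro x hx
    have hftc : (∫ t in c..x, u' t) = u x - u c :=
      intervalIntegral.integral_eq_sub_of_hasDerivAt (fun t _ => hu t)
        (hc'.intervalIntegrable _ _)
    have h1 : |u x| = ‖∫ t in c..x, u' t‖ := by
      rw [hftc, hc0, sub_zero]; rfl
    rw [h1]
    refine le_trans (intervalIntegral.norm_integral_le_integral_norm_uIoc) ?_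
    have hsub : Set.uIoc c x ⊆ Set.Icc (-1:ℝ) 1 := by
      refine Set.Subset.trans Set.uIoc_subset_uIcc (Set.uIcc_subset_Icc hcmem hx)
    have : (∫ t in Set.uIoc c x, ‖u' t‖) ≤ ∫ t in Set.Icc (-1:ℝ) 1, ‖u' t‖ := by
      refine setIntegral_mono_set (hc'.norm.integrableOn_Icc) ?_ (HasSubset.Subset.eventuallyLE hsub)
      filter_upwards with t using norm_nonneg _
    refine this.trans_eq ?_
    rw [MeasureTheory.integral_Icc_eq_integral_Ioo]
  -- K ≤ sqrt 2 * sqrt (∫ u'^2)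
  have hcs : K ≤ Real.sqrt (∫ z in Set.Ioo (-1:ℝ) 1, ‖u' z‖^2) * Real.sqrt 2 := by
    have := cs (f := u') (g := fun _ => (1:ℝ)) hc' continuous_const
    simp only [norm_one, mul_one, one_pow] at this
    rw [hK]
    refine this.trans_eq ?_
    congr 1
    rw [setIntegral_const]
    simp [Real.volume_Ioo]
    norm_num
  have hK2 : K^2 ≤ 2 * ∫ z in Set.Ioo (-1:ℝ) 1, ‖u' z‖^2 := by
    have h2 : K^2 ≤ (Real.sqrt (∫ z in Set.Ioo (-1:ℝ) 1, ‖u' z‖^2) * Real.sqrt 2)^2 := by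
      exact pow_le_pow_left₀ hKnonneg hcs 2
    refine h2.trans_eq ?_
    rw [mul_pow, Real.sq_sqrt (setIntegral_nonneg measurableSet_Ioo (fun x _ => sq_nonneg _)),
      Real.sq_sqrt (by norm_num)]
    ring
  -- conclude
  have hmono : (∫ z in Set.Ioo (-1:ℝ) 1, ‖u z‖^2) ≤ ∫ _z in Set.Ioo (-1:ℝ) 1, K^2 := by
    refine setIntegral_mono_on (contIntOn (by continuity)) ((integrableOn_const_iff (by finiteness)).mpr ?_)
      measurableSet_Ioo (fun x hx => ?_)
    · right; rw [Real.volume_Ioo]; exact ENNReal.ofReal_lt_top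
    · have := hpt x (Ioo_subset_Icc_self hx)
      calc ‖u x‖^2 = |u x|^2 := rfl
        _ ≤ K^2 := pow_le_pow_left₀ (abs_nonneg _) this 2
  rw [setIntegral_const] at hmono
  have hvol : (volume (Set.Ioo (-1:ℝ) 1)).toReal = 2 := by
    rw [Real.volume_Ioo]; rw [ENNReal.toReal_ofReal (by norm_num)]; norm_num
  rw [measureReal_def, hvol] at hmono
  calc (∫ z in Set.Ioo (-1:ℝ) 1, ‖u z‖^2) ≤ 2 • K^2 := hmono
    _ = 2 * K^2 := by rw [smul_eq_mul]
    _ ≤ 2 * (2 * ∫ z in Set.Ioo (-1:ℝ) 1, ‖u' z‖^2) := by linarith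
    _ = 4 * ∫ z in Set.Ioo (-1:ℝ) 1, ‖u' z‖^2 := by ring

lemma poincare {φ : ℝ → ℂ} (hφ : ContDiff ℝ 2 φ)
    (hmean : (∫ z in Set.Ioo (-1:ℝ) 1, φ z) = 0) :
    (∫ z in Set.Ioo (-1:ℝ) 1, ‖φ z‖^2) ≤ 4 * ∫ z in Set.Ioo (-1:ℝ) 1, ‖deriv φ z‖^2 := by
  obtain ⟨hd0, hd1, hc1, hc2⟩ := derivs hφ
  set u : ℝ → ℝ := fun x => (φ x).re with hu
  set v : ℝ → ℝ := fun x => (φ x).im with hv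
  set u' : ℝ → ℝ := fun x => (deriv φ x).re with hu'
  set v' : ℝ → ℝ := fun x => (deriv φ x).im with hv'
  have hud : ∀ x, HasDerivAt u (u' x) x := fun x =>
    (Complex.reCLM.hasFDerivAt).comp_hasDerivAt x (hd0 x)
  have hvd : ∀ x, HasDerivAt v (v' x) x := fun x =>
    (Complex.imCLM.hasFDerivAt).comp_hasDerivAt x (hd0 x)
  have hcu : Continuous u := Complex.continuous_re.comp hφ.continuous
  have hcv : Continuous v := Complex.continuous_im.comp hφ.continuous
  have hcu' : Continuous u' := Complex.continuous_re.comp hc1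
  have hcv' : Continuous v' := Complex.continuous_im.comp hc1
  have hmu : (∫ z in Set.Ioo (-1:ℝ) 1, u z) = 0 := by
    have := integral_re (𝕜 := ℂ) (μ := volume.restrict (Set.Ioo (-1:ℝ) 1))
      (contIntOn hφ.continuous)
    rw [hmean] at this
    simpa using this
  have hmv : (∫ z in Set.Ioo (-1:ℝ) 1, v z) = 0 := by
    have := integral_im (𝕜 := ℂ) (μ := volume.restrict (Set.Ioo (-1:ℝ) 1))
      (contIntOn hφ.continuous)
    rw [hmean] at this
    simpa using this
  have hp1 := poincare_real hud hcu hcu' hmu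
  have hp2 := poincare_real hvd hcv hcv' hmv
  have hsplit : ∀ (f : ℝ → ℂ), Continuous f → (∫ z in Set.Ioo (-1:ℝ) 1, ‖f z‖^2) =
      (∫ z in Set.Ioo (-1:ℝ) 1, ‖(f z).re‖^2) + (∫ z in Set.Ioo (-1:ℝ) 1, ‖(f z).im‖^2) := by
    intro f hf
    rw [← integral_add (contIntOn (by fun_prop)) (contIntOn (by fun_prop))]
    refine setIntegral_congr_fun measurableSet_Ioo (fun z _ => ?_)
    rw [Real.norm_eq_abs, Real.norm_eq_abs, sq_abs, sq_abs,
      Complex.sq_norm, Complex.normSq_apply]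
    ring
  rw [hsplit φ hφ.continuous, hsplit (deriv φ) hc1]
  have e1 : (∫ z in Set.Ioo (-1:ℝ) 1, ‖(φ z).re‖^2) = ∫ z in Set.Ioo (-1:ℝ) 1, ‖u z‖^2 := rfl
  linarith [hp1, hp2]

set_option maxHeartbeats 1000000 in
/-- Elliptic estimate for the Neumann problem `(|k|² - ∂²_z) φ = a` on `(-1,1)`,
with constant uniform in the frequency `k ∈ ℤ²`. -/
theorem elliptic_neumann_estimate :
    ∃ C > 0, ∀ (k : ℤ × ℤ) (φ a : ℝ → ℂ),
      ContDiff ℝ 2 φ →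
      (∀ z ∈ Set.Ioo (-1:ℝ) 1,
        ((knorm k ^ 2 : ℝ) : ℂ) * φ z - deriv (deriv φ) z = a z) →
      deriv φ (-1) = 0 → deriv φ 1 = 0 →
      (k = 0 → (∫ z in Set.Ioo (-1:ℝ) 1, φ z) = 0) →
      IntegrableOn (fun z => ‖a z‖ ^ 2) (Set.Ioo (-1:ℝ) 1) →
      knorm k ^ 2 * L2norm φ + knorm k * H1norm φ + H2norm φ ≤ C * L2norm a := by
  refine ⟨6, by norm_num, ?_⟩
  intro k φ a hφ hpde hb1 hb2 hmean _hint
  obtain ⟨hd0, hd1, hc1, hc2⟩ := derivs hφ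
  set m : ℝ := knorm k ^ 2 with hm
  have hm_val : m = (k.1:ℝ)^2 + (k.2:ℝ)^2 := Real.sq_sqrt (by positivity)
  have hm0 : 0 ≤ m := by rw [hm_val]; positivity
  set b : ℝ → ℂ := fun z => (m:ℂ) * φ z - deriv (deriv φ) z with hb
  have hbc : Continuous b := (continuous_const.mul hφ.continuous).sub hc2
  set P := ∫ z in Set.Ioo (-1:ℝ) 1, ‖φ z‖^2 with hP
  set Q := ∫ z in Set.Ioo (-1:ℝ) 1, ‖deriv φ z‖^2 with hQ
  set R := ∫ z in Set.Ioo (-1:ℝ) 1, ‖deriv (deriv φ) z‖^2 with hR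
  set A := ∫ z in Set.Ioo (-1:ℝ) 1, ‖b z‖^2 with hA
  have hP0 : 0 ≤ P := setIntegral_nonneg measurableSet_Ioo fun x _ => sq_nonneg _
  have hQ0 : 0 ≤ Q := setIntegral_nonneg measurableSet_Ioo fun x _ => sq_nonneg _
  have hR0 : 0 ≤ R := setIntegral_nonneg measurableSet_Ioo fun x _ => sq_nonneg _
  have hA0 : 0 ≤ A := setIntegral_nonneg measurableSet_Ioo fun x _ => sq_nonneg _
  have hsA := Real.sqrt_nonneg A
  have hsP := Real.sqrt_nonneg P
  have hsQ := Real.sqrt_nonneg Q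
  have hmsA := Real.mul_self_sqrt hA0
  have hmsP := Real.mul_self_sqrt hP0
  have hmsQ := Real.mul_self_sqrt hQ0
  -- L2 norm of a
  have hL2a : L2norm a = Real.sqrt A := by
    unfold L2norm
    congr 1
    refine setIntegral_congr_fun measurableSet_Ioo (fun z hz => ?_)
    rw [← hpde z hz]
  -- energy inequality
  have hE : m * P + Q ≤ Real.sqrt A * Real.sqrt P := energy hφ hb1 hb2 m
  -- norms in terms of P, Q, R
  have hL2φ : L2norm φ = Real.sqrt P := rfl
  have hH1 : H1norm φ = Real.sqrt (P + Q) := by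
    unfold H1norm
    congr 1
    exact integral_add (contIntOn (hφ.continuous.norm.pow 2)) (contIntOn (hc1.norm.pow 2))
  have hH2 : H2norm φ = Real.sqrt (P + Q + R) := by
    unfold H2norm
    congr 1
    rw [integral_add (f := fun z => ‖φ z‖ ^ 2 + ‖deriv φ z‖ ^ 2) (g := fun z => ‖deriv (deriv φ) z‖ ^ 2) (contIntOn ((hφ.continuous.norm.pow 2).add (hc1.norm.pow 2)))
      (contIntOn (hc2.norm.pow 2)),
      integral_add (f := fun z => ‖φ z‖ ^ 2) (g := fun z => ‖deriv φ z‖ ^ 2) (contIntOn (hφ.continuous.norm.pow 2)) (contIntOn (hc1.norm.pow 2))]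
  have hPoin : k = 0 → P ≤ 4 * Q := fun hk => poincare hφ (hmean hk)
  have hRA0 : k = 0 → R = A := by
    intro hk
    have hmz : m = 0 := by
      rw [hm]; subst hk; unfold knorm; simp
    rw [hR, hA]
    refine setIntegral_congr_fun measurableSet_Ioo (fun z _ => ?_)
    simp [hb, hmz]
  have hRb : R ≤ 2*m^2*P + 2*A := by
    have hptR : ∀ z, ‖deriv (deriv φ) z‖^2 ≤ 2*m^2*‖φ z‖^2 + 2*‖b z‖^2 := by
      intro z
      have he : deriv (deriv φ) z = (m:ℂ)*φ z - b z := by rw [hb]; ring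
      rw [he]
      have h1 : ‖(m:ℂ)*φ z - b z‖ ≤ m*‖φ z‖ + ‖b z‖ := by
        refine (norm_sub_le _ _).trans ?_
        rw [norm_mul, Complex.norm_real, Real.norm_eq_abs, abs_of_nonneg hm0]
      nlinarith [norm_nonneg ((m:ℂ)*φ z - b z), norm_nonneg (φ z), norm_nonneg (b z),
        sq_nonneg (m*‖φ z‖ - ‖b z‖), mul_nonneg hm0 (norm_nonneg (φ z))]
    rw [hR, hP, hA]
    calc (∫ z in Set.Ioo (-1:ℝ) 1, ‖deriv (deriv φ) z‖^2)
        ≤ ∫ z in Set.Ioo (-1:ℝ) 1, (2*m^2*‖φ z‖^2 + 2*‖b z‖^2) := by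
          refine setIntegral_mono_on (contIntOn (hc2.norm.pow 2))
            (((contIntOn (hφ.continuous.norm.pow 2)).const_mul _).add
              ((contIntOn (hbc.norm.pow 2)).const_mul _))
            measurableSet_Ioo (fun z _ => hptR z)
      _ = _ := by
          rw [integral_add (f := fun z => 2*m^2*‖φ z‖^2) (g := fun z => 2*‖b z‖^2) ((contIntOn (hφ.continuous.norm.pow 2)).const_mul _)
            ((contIntOn (hbc.norm.pow 2)).const_mul _), integral_const_mul, integral_const_mul]
  clear_value m b P Q R A
  rw [hL2a, hL2φ, hH1, hH2]
  by_cases hk0 : k = 0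
  · -- k = 0 case
    have hknorm : knorm k = 0 := by
      subst hk0; unfold knorm; simp
    have hmz : m = 0 := by rw [hm, hknorm]; norm_num
    have hPoin' : P ≤ 4 * Q := hPoin hk0
    have hE0 : Q ≤ Real.sqrt A * Real.sqrt P := by
      rw [hmz] at hE; linarith
    have hsPQ : Real.sqrt P ≤ 2 * Real.sqrt Q := by
      have h1 : Real.sqrt P ≤ Real.sqrt (4 * Q) := Real.sqrt_le_sqrt hPoin'
      rwa [Real.sqrt_mul (by norm_num), show Real.sqrt 4 = 2 by
        rw [show (4:ℝ) = 2^2 by norm_num, Real.sqrt_sq (by norm_num)]] at h1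
    have hsQA : Real.sqrt Q ≤ 2 * Real.sqrt A := by
      rcases eq_or_lt_of_le hsQ with h0 | h0
      · rw [← h0]; positivity
      · have h2 : Real.sqrt Q * Real.sqrt Q ≤ 2 * Real.sqrt A * Real.sqrt Q := by
          calc Real.sqrt Q * Real.sqrt Q = Q := hmsQ
            _ ≤ Real.sqrt A * Real.sqrt P := hE0
            _ ≤ Real.sqrt A * (2 * Real.sqrt Q) := by
                exact mul_le_mul_of_nonneg_left hsPQ hsA
            _ = 2 * Real.sqrt A * Real.sqrt Q := by ring
        exact le_of_mul_le_mul_right h2 h0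
    have hQA : Q ≤ 4 * A := by nlinarith
    have hPA : P ≤ 16 * A := by linarith
    have hRA : R = A := hRA0 hk0
    rw [hmz, hknorm]
    simp only [zero_mul, zero_add]
    calc Real.sqrt (P + Q + R) ≤ Real.sqrt (36 * A) := Real.sqrt_le_sqrt (by linarith)
      _ = 6 * Real.sqrt A := by
          rw [Real.sqrt_mul (by norm_num), show Real.sqrt 36 = 6 by
            rw [show (36:ℝ) = 6^2 by norm_num, Real.sqrt_sq (by norm_num)]]
  · -- k ≠ 0 case
    have hm1 : 1 ≤ m := by
      rw [hm_val]
      have h1 : k.1 ≠ 0 ∨ k.2 ≠ 0 := by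
        by_contra h
        push_neg at h
        exact hk0 (Prod.ext h.1 h.2)
      have hsq : ∀ n : ℤ, n ≠ 0 → (1:ℤ) ≤ n^2 := by
        intro n hn
        have h2 := Int.one_le_abs hn
        have h3 : (1:ℤ)*1 ≤ |n| * |n| := mul_le_mul h2 h2 (by norm_num) (abs_nonneg _)
        rw [abs_mul_abs_self] at h3
        rw [sq]; linarith
      have : (1:ℤ) ≤ k.1^2 + k.2^2 := by
        rcases h1 with h | h
        · have := hsq k.1 h; nlinarith [sq_nonneg k.2]
        · have := hsq k.2 h; nlinarith [sq_nonneg k.1]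
      exact_mod_cast this
    have key : m * Real.sqrt P ≤ Real.sqrt A := by
      rcases eq_or_lt_of_le hsP with h0 | h0
      · rw [← h0]; simpa using hsA
      · have h2 : m * Real.sqrt P * Real.sqrt P ≤ Real.sqrt A * Real.sqrt P := by
          calc m * Real.sqrt P * Real.sqrt P = m * P := by rw [mul_assoc, hmsP]
            _ ≤ Real.sqrt A * Real.sqrt P := by linarith
        exact le_of_mul_le_mul_right h2 h0
    have hm2P : m^2 * P ≤ A := by nlinarith
    have hsPA : Real.sqrt P ≤ Real.sqrt A := by nlinarith
    have hMPQ : m * P + Q ≤ A := by nlinarith [mul_le_mul_of_nonneg_left hsPA hsA]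
    have hPA : P ≤ A := by nlinarith
    have hQA : Q ≤ A := by linarith [mul_nonneg hm0 hP0]
    have hmQ : m * Q ≤ A := by
      have t1 : m * (m*P + Q) ≤ m * (Real.sqrt A * Real.sqrt P) :=
        mul_le_mul_of_nonneg_left hE hm0
      have t2 : Real.sqrt A * (m * Real.sqrt P) ≤ Real.sqrt A * Real.sqrt A :=
        mul_le_mul_of_nonneg_left key hsA
      nlinarith [mul_nonneg (mul_nonneg hm0 hm0) hP0]
    have hRA : R ≤ 4 * A := by nlinarith
    -- combine the three terms
    have term1 : m * Real.sqrt P ≤ Real.sqrt A := key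
    have hkn0 : 0 ≤ knorm k := Real.sqrt_nonneg _
    have hkn : knorm k = Real.sqrt m := by rw [hm, Real.sqrt_sq hkn0]
    have term2 : knorm k * Real.sqrt (P + Q) ≤ 2 * Real.sqrt A := by
      rw [hkn, ← Real.sqrt_mul hm0]
      have h1 : m * (P + Q) ≤ 4 * A := by nlinarith [mul_le_mul_of_nonneg_left hPA hm0]
      calc Real.sqrt (m * (P+Q)) ≤ Real.sqrt (4 * A) := Real.sqrt_le_sqrt h1
        _ = 2 * Real.sqrt A := by
            rw [Real.sqrt_mul (by norm_num), show Real.sqrt 4 = 2 by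
              rw [show (4:ℝ) = 2^2 by norm_num, Real.sqrt_sq (by norm_num)]]
    have term3 : Real.sqrt (P + Q + R) ≤ 3 * Real.sqrt A := by
      calc Real.sqrt (P + Q + R) ≤ Real.sqrt (9 * A) := Real.sqrt_le_sqrt (by linarith)
        _ = 3 * Real.sqrt A := by
            rw [Real.sqrt_mul (by norm_num), show Real.sqrt 9 = 3 by
              rw [show (9:ℝ) = 3^2 by norm_num, Real.sqrt_sq (by norm_num)]]
    linarith
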